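/- Let F be a field of characteristic zero, V a finite-dimensional F-vector space, and Q a nondegenerate quadratic form on V. If g is a unit of the Clifford algebra C(V) satisfying α(g)·ι(v)·g⁻¹ = ι(v) for all v ∈ V, then g is a nonzero scalar: there exists λ ∈ F, λ ≠ 0, with g = λ·1 in C(V). (Equivalently, the kernel of the canonical projection P : GPin(V) → O(V), P(g)(v) = α(g)·v·g⁻¹, is GL(1) = F^×.) -/

import Mathlib

open CliffordAlgebra

section twisted
variable {F V : Type*} [CommRing F] [AddCommGroup V] [Module F V]

/-- The twisted commutator of `ι v` with any element is the contraction by `polar v ·`. -/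
theorem twisted_comm_aux (Q : QuadraticForm F V) (v : V) (x : CliffordAlgebra Q) :
    ι Q v * x - involute x * ι Q v = contractLeft (Q.polarBilin v) x := by
  induction x using CliffordAlgebra.left_induction with
  | algebraMap r =>
      simp [Algebra.commutes, contractLeft_algebraMap]
  | add x y hx hy =>
      rw [map_add, map_add, mul_add, add_mul, ← hx, ← hy]; abel
  | ι_mul x m hx =>
      rw [contractLeft_ι_mul, ← hx, map_mul, involute_ι]
      have hps : (Q.polarBilin v) m • x = algebraMap F (CliffordAlgebra Q)
          (QuadraticMap.polar Q v m) * x := by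
        rw [Algebra.smul_def]; rfl
      have h2 : ι Q v * ι Q m = algebraMap F _ (QuadraticMap.polar Q v m) - ι Q m * ι Q v :=
        eq_sub_of_add_eq (CliffordAlgebra.ι_mul_ι_add_swap (Q := Q) v m)
      rw [hps, ← mul_assoc, h2]
      noncomm_ring
end twisted

section exteriorstep
variable {F V : Type*} [Field F] [AddCommGroup V] [Module F V]

/-- The "number operator" built from a basis acts on grade-`i` elements of the exterior
algebra as multiplication by `i`. -/
theorem ext_num_op {κ : Type*} [Fintype κ] (b : Module.Basis κ F V)
    {i : ℕ} {x : ExteriorAlgebra F V} (hx : x ∈ ⋀[F]^i V) :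
    ∑ j, ExteriorAlgebra.ι F (b j) * contractLeft (b.coord j) x = i • x := by
  induction hx using Submodule.pow_induction_on_left' with
  | algebraMap r =>
      simp [contractLeft_algebraMap]
  | add x y n hx hy ihx ihy =>
      simp only [map_add, mul_add, Finset.sum_add_distrib, ihx, ihy, smul_add]
  | mem_mul m hm n x ih ihx =>
      obtain ⟨v, rfl⟩ := hm
      have h1 : (∑ j, (b.coord j) v • ExteriorAlgebra.ι F (b j)) = ExteriorAlgebra.ι F v := by
        simp_rw [← LinearMap.map_smul, ← map_sum, Module.Basis.coord_apply, Module.Basis.sum_repr]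
      have hanti : ∀ (a : V) (y : ExteriorAlgebra F V),
          ExteriorAlgebra.ι F a * (ExteriorAlgebra.ι F v * y)
            = -(ExteriorAlgebra.ι F v * (ExteriorAlgebra.ι F a * y)) := by
        intro a y
        have : ExteriorAlgebra.ι F a * ExteriorAlgebra.ι F v
            = -(ExteriorAlgebra.ι F v * ExteriorAlgebra.ι F a) :=
          eq_neg_of_add_eq_zero_left (ExteriorAlgebra.ι_add_mul_swap a v)
        rw [← mul_assoc, ← mul_assoc, this, neg_mul]
      calc ∑ j, ExteriorAlgebra.ι F (b j) * contractLeft (b.coord j)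
              (ExteriorAlgebra.ι F v * x)
          = ∑ j, ((b.coord j) v • (ExteriorAlgebra.ι F (b j) * x)
              - (ExteriorAlgebra.ι F (b j)) * (ExteriorAlgebra.ι F v
                  * contractLeft (b.coord j) x)) := by
            simp_rw [contractLeft_ι_mul, mul_sub, mul_smul_comm]
        _ = (∑ j, (b.coord j) v • ExteriorAlgebra.ι F (b j)) * x
              + ExteriorAlgebra.ι F v * ∑ j, (ExteriorAlgebra.ι F (b j))
                  * contractLeft (b.coord j) x := by
            rw [Finset.sum_sub_distrib, Finset.sum_mul, Finset.mul_sum]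
            simp_rw [hanti, Finset.sum_neg_distrib, sub_neg_eq_add, smul_mul_assoc]
        _ = (n + 1) • (ExteriorAlgebra.ι F v * x) := by
            rw [h1, ihx, mul_smul_comm, succ_nsmul, add_comm]

/-- An element of the exterior algebra annihilated by every contraction is a scalar. -/
theorem ext_scalar [CharZero F] [FiniteDimensional F V] (x : ExteriorAlgebra F V)
    (hx : ∀ d : Module.Dual F V, contractLeft d x = 0) :
    ∃ r : F, x = algebraMap F (ExteriorAlgebra F V) r := by
  classical
  set 𝒜 : ℕ → Submodule F (ExteriorAlgebra F V) := fun i => ⋀[F]^i V with h𝒜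
  let b := Module.finBasis F V
  set c : ℕ → ExteriorAlgebra F V :=
    fun j => (DirectSum.decompose 𝒜 x j : ExteriorAlgebra F V) with hc
  have hmem : ∀ j, c j ∈ 𝒜 j := fun j => SetLike.coe_mem _
  set s := (DirectSum.decompose 𝒜 x).support with hs
  have hxsum : x = ∑ j ∈ s, c j := (DirectSum.sum_support_decompose 𝒜 x).symm
  have hS : ∑ j ∈ s, j • c j = 0 := by
    have h1 : ∀ j ∈ s, j • c j
        = ∑ i, ExteriorAlgebra.ι F (b i) * contractLeft (b.coord i) (c j) :=
      fun j _ => (ext_num_op b (hmem j)).symm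
    rw [Finset.sum_congr rfl h1, Finset.sum_comm]
    have h2 : ∀ i, ∑ j ∈ s, ExteriorAlgebra.ι F (b i) * contractLeft (b.coord i) (c j)
        = 0 := by
      intro i
      rw [← Finset.mul_sum, ← map_sum, ← hxsum, hx, mul_zero]
    rw [Finset.sum_congr rfl fun i _ => h2 i, Finset.sum_const_zero]
  have hcomp : ∀ k, k • c k = 0 := by
    intro k
    by_cases hk : k ∈ s
    · have h0 : ((DirectSum.decompose 𝒜 (∑ j ∈ s, j • c j)) k : ExteriorAlgebra F V)
          = 0 := by rw [hS]; simp
      rw [DirectSum.decompose_sum] at h0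
      rw [DFinsupp.finset_sum_apply, AddSubmonoidClass.coe_finset_sum] at h0
      have h3 : ∀ j ∈ s, ((DirectSum.decompose 𝒜 (j • c j) k : 𝒜 k) : ExteriorAlgebra F V)
          = if j = k then j • c j else 0 := by
        intro j _
        rcases eq_or_ne j k with rfl | hjk
        · rw [DirectSum.decompose_of_mem_same 𝒜 (nsmul_mem (hmem j) j), if_pos rfl]
        · rw [DirectSum.decompose_of_mem_ne 𝒜 (nsmul_mem (hmem j) j) hjk, if_neg hjk]
      rw [Finset.sum_congr rfl h3, Finset.sum_ite_eq' s k (fun j => j • c j), if_pos hk] at h0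
      exact h0
    · have hck : c k = 0 := by
        have h5 : (DirectSum.decompose 𝒜 x) k = 0 := DFinsupp.notMem_support_iff.mp hk
        simp only [hc, h5, ZeroMemClass.coe_zero]
      rw [hck, smul_zero]
  have hzero : ∀ k ∈ s, k ≠ 0 → c k = 0 := by
    intro k _ hk
    have h4 : (k : F) • c k = 0 := by
      rw [Nat.cast_smul_eq_nsmul]; exact hcomp k
    rcases smul_eq_zero.mp h4 with h | h
    · exact absurd (Nat.cast_eq_zero.mp h) hk
    · exact h
  have hx0 : x = c 0 := by
    rw [hxsum]
    refine Finset.sum_eq_single 0 hzero fun h0 => ?_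
    have h5 : (DirectSum.decompose 𝒜 x) 0 = 0 := DFinsupp.notMem_support_iff.mp h0
    simp only [hc, h5, ZeroMemClass.coe_zero]
  have h6 : c 0 ∈ (LinearMap.range (ExteriorAlgebra.ι F : V →ₗ[F] ExteriorAlgebra F V) ^ 0) :=
    hmem 0
  rw [pow_zero] at h6
  obtain ⟨r, hr⟩ := Submodule.mem_one.mp h6
  exact ⟨r, by rw [hx0, ← hr]⟩
end exteriorstep

/-- Let `F` be a field of characteristic zero, `V` a finite-dimensional `F`-vector space, and
`Q` a nondegenerate quadratic form on `V`. If `g` is a unit of the Clifford algebra `C(V)`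
satisfying `α(g)·ι(v)·g⁻¹ = ι(v)` for all `v ∈ V`, then `g` is a nonzero scalar:
there exists `λ ∈ F`, `λ ≠ 0`, with `g = λ·1` in `C(V)`.  (The kernel of the canonical
projection `P : GPin(V) → O(V)` is `GL(1) = Fˣ`.) -/
theorem kernel_of_projection_is_scalars
    {F V : Type*} [Field F] [CharZero F] [AddCommGroup V] [Module F V]
    [FiniteDimensional F V] (Q : QuadraticForm F V) (hQ : Q.polarBilin.Nondegenerate)
    (g : (CliffordAlgebra Q)ˣ)
    (hg : ∀ v : V, involute (g : CliffordAlgebra Q) * ι Q v *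
        ((g⁻¹ : (CliffordAlgebra Q)ˣ) : CliffordAlgebra Q) = ι Q v) :
    ∃ l : F, l ≠ 0 ∧ (g : CliffordAlgebra Q) = algebraMap F (CliffordAlgebra Q) l := by
  haveI : Invertible (2 : F) := invertibleOfNonzero two_ne_zero
  have h1 : ∀ v : V, involute (g : CliffordAlgebra Q) * ι Q v
      = ι Q v * (g : CliffordAlgebra Q) := by
    intro v
    have h := congrArg (· * (g : CliffordAlgebra Q)) (hg v)
    simpa [mul_assoc, Units.inv_mul] using h
  have hcon : ∀ d : Module.Dual F V, contractLeft d ((g : CliffordAlgebra Q)) = 0 := by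
    intro d
    have hv : Q.polarBilin ((LinearMap.BilinForm.toDual Q.polarBilin hQ).symm d) = d := by
      ext w
      exact LinearMap.BilinForm.apply_toDual_symm_apply d w
    rw [← hv, ← twisted_comm_aux, h1, sub_self]
  have hy : ∀ d : Module.Dual F V, contractLeft d (equivExterior Q (g : CliffordAlgebra Q))
      = 0 := by
    intro d
    have h2 := changeForm_contractLeft (Q' := (0 : QuadraticForm F V))
      (h := changeForm.associated_neg_proof) d (g : CliffordAlgebra Q)
    rw [hcon d, map_zero] at h2
    exact h2.symm
  obtain ⟨r, hr⟩ := ext_scalar (equivExterior Q (g : CliffordAlgebra Q)) hy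
  have hg_eq : (g : CliffordAlgebra Q) = algebraMap F (CliffordAlgebra Q) r := by
    apply (equivExterior Q).injective
    rw [hr]
    exact (changeForm_algebraMap changeForm.associated_neg_proof r).symm
  refine ⟨r, ?_, hg_eq⟩
  rintro rfl
  have : (g : CliffordAlgebra Q) = 0 := by rw [hg_eq, map_zero]
  exact (Units.ne_zero g) this
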